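/- Let G = ([s], E) be a directed graph in which every vertex has its in-degree equal to its out-degree and every vertex has out-degree at least αs for some α ≥ 1/2. Then all eigenvalues of M = D⁻¹W D⁻¹Wᵀ are real and nonnegative, the largest eigenvalue is λ₁(M) = 1, and the second largest eigenvalue satisfies λ₂(M) ≤ 1 − (2α − 1)s²/(d_max⁺)². -/

import Mathlib

open Finset Matrix

/-- The out-degree of vertex `i`: the number of `j` with an edge from `i` to `j`. -/
def outDeg {n : ℕ} (E : Fin n → Fin n → Bool) (i : Fin n) : ℕ :=
  (Finset.univ.filter fun j => E i j = true).card

/-- The in-degree of vertex `j`: the number of `i` with an edge from `i` to `j`. -/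
def inDeg {n : ℕ} (E : Fin n → Fin n → Bool) (j : Fin n) : ℕ :=
  (Finset.univ.filter fun i => E i j = true).card

/-- Maximum out-degree. -/
noncomputable def dmaxOut {n : ℕ} (E : Fin n → Fin n → Bool) : ℕ := sSup (Set.range (outDeg E))

/-- The binary adjacency matrix: `W i j = 1` iff there is a directed edge from `i` to `j`. -/
def Wbin {n : ℕ} (E : Fin n → Fin n → Bool) : Matrix (Fin n) (Fin n) ℝ :=
  fun i j => if E i j = true then 1 else 0

/-- The inverse `D⁻¹` of the diagonal out-degree matrix `D = diag(d₁⁺, …, d_n⁺)`. -/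
noncomputable def Dinv {n : ℕ} (E : Fin n → Fin n → Bool) : Matrix (Fin n) (Fin n) ℝ :=
  Matrix.diagonal fun i => (outDeg E i : ℝ)⁻¹

lemma root_iff_eigen {n : ℕ} (A : Matrix (Fin n) (Fin n) ℝ) (z : ℂ) :
    z ∈ (A.charpoly.map (algebraMap ℝ ℂ)).roots ↔
      ∃ v : Fin n → ℂ, v ≠ 0 ∧ (A.map (algebraMap ℝ ℂ)) *ᵥ v = z • v := by
  set Ac := A.map (algebraMap ℝ ℂ)
  have hcp : A.charpoly.map (algebraMap ℝ ℂ) = Ac.charpoly :=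
    (Matrix.charpoly_map A (algebraMap ℝ ℂ)).symm
  rw [hcp, Polynomial.mem_roots (Ac.charpoly_monic.ne_zero)]
  have heval : Ac.charpoly.eval z = (Matrix.diagonal (fun _ : Fin n => z) - Ac).det := by
    rw [Matrix.charpoly, ← Polynomial.coe_evalRingHom, RingHom.map_det]
    congr 1
    ext i j
    by_cases h : i = j
    · subst h; simp [Matrix.charmatrix_apply_eq, Matrix.diagonal_apply_eq]
    · simp [Matrix.charmatrix_apply_ne _ _ _ h, Matrix.diagonal_apply_ne _ h]
  rw [Polynomial.IsRoot, heval, ← Matrix.exists_mulVec_eq_zero_iff]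
  constructor
  · rintro ⟨v, hv, h⟩
    refine ⟨v, hv, ?_⟩
    have h2 := h
    rw [Matrix.sub_mulVec, sub_eq_zero] at h2
    rw [← h2]
    ext i
    simp [Matrix.mulVec_diagonal]
  · rintro ⟨v, hv, h⟩
    refine ⟨v, hv, ?_⟩
    rw [Matrix.sub_mulVec, sub_eq_zero, h]
    ext i
    simp [Matrix.mulVec_diagonal]

lemma osc_lemma {n : ℕ} (A : Matrix (Fin n) (Fin n) ℝ) (c lam : ℝ)
    (h0 : ∀ i k, c ≤ A i k) (hrow : ∀ i, ∑ k, A i k = 1)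
    (x : Fin n → ℝ) (hx : x ≠ 0) (heig : ∀ i, ∑ k, A i k * x k = lam * x i) :
    lam = 1 ∨ lam ≤ 1 - n * c := by
  have hn : 0 < n := by
    rcases Nat.eq_zero_or_pos n with h | h
    · subst h
      exact absurd (funext fun i : Fin 0 => Fin.elim0 i : x = 0) hx
    · exact h
  have : Nonempty (Fin n) := ⟨⟨0, hn⟩⟩
  obtain ⟨i0, -, hi0⟩ := Finset.exists_max_image (Finset.univ : Finset (Fin n)) x ⟨⟨0, hn⟩, mem_univ _⟩
  obtain ⟨j0, -, hj0⟩ := Finset.exists_min_image (Finset.univ : Finset (Fin n)) x ⟨⟨0, hn⟩, mem_univ _⟩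
  set a := x i0 with ha
  set b := x j0 with hb
  have hba : b ≤ a := hj0 i0 (mem_univ _) |>.trans (le_refl _) |>.trans (le_refl _)
  by_cases hab : a = b
  · left
    have hconst : ∀ k, x k = a := fun k => le_antisymm (hi0 k (mem_univ _)) (hab ▸ hj0 k (mem_univ _))
    have hane : a ≠ 0 := by
      intro h0'
      apply hx
      funext k; rw [hconst k, h0']; rfl
    have h1 : ∑ k, A i0 k * x k = a := by
      calc ∑ k, A i0 k * x k = ∑ k, A i0 k * a := by
            apply Finset.sum_congr rfl; intro k _; rw [hconst k]
        _ = (∑ k, A i0 k) * a := by rw [Finset.sum_mul]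
        _ = a := by rw [hrow i0, one_mul]
    have h2 := heig i0
    rw [h1] at h2
    have : lam * a = a := h2.symm
    field_simp at this
    rcases mul_eq_mul_right_iff.mp (by linarith : lam * a = 1 * a) with h | h
    · exact h
    · exact absurd h hane
  · right
    have hab' : b < a := lt_of_le_of_ne hba (fun h => hab h.symm)
    have key : lam * (a - b) ≤ (1 - n * c) * (a - b) := by
      have e1 : lam * a - lam * b = (∑ k, (A i0 k - c) * x k) - (∑ k, (A j0 k - c) * x k) := by
        rw [← heig i0, ← heig j0]
        simp only [sub_mul, Finset.sum_sub_distrib]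
        ring
      have e2 : ∑ k, (A i0 k - c) * x k ≤ (1 - n * c) * a := by
        calc ∑ k, (A i0 k - c) * x k ≤ ∑ k, (A i0 k - c) * a := by
              apply Finset.sum_le_sum
              intro k _
              exact mul_le_mul_of_nonneg_left (hi0 k (mem_univ _)) (by linarith [h0 i0 k])
          _ = (1 - n * c) * a := by
              rw [← Finset.sum_mul]
              congr 1
              rw [Finset.sum_sub_distrib, hrow i0]
              simp [Finset.card_univ]
      have e3 : (1 - n * c) * b ≤ ∑ k, (A j0 k - c) * x k := by
        calc (1 - n * c) * b = ∑ k, (A j0 k - c) * b := by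
              rw [← Finset.sum_mul]
              congr 1
              rw [Finset.sum_sub_distrib, hrow j0]
              simp [Finset.card_univ]
          _ ≤ ∑ k, (A j0 k - c) * x k := by
              apply Finset.sum_le_sum
              intro k _
              exact mul_le_mul_of_nonneg_left (hj0 k (mem_univ _)) (by linarith [h0 j0 k])
      calc lam * (a - b) = lam * a - lam * b := by ring
        _ ≤ (1 - n * c) * a - (1 - n * c) * b := by rw [e1]; linarith
        _ = (1 - n * c) * (a - b) := by ring
    have hpos : 0 < a - b := by linarith
    exact le_of_mul_le_mul_right key hpos

lemma real_nonneg_eig {n : ℕ} (d : Fin n → ℝ) (hd : ∀ i, 0 < d i)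
    (e : Fin n → Fin n → ℝ)
    (M : Matrix (Fin n) (Fin n) ℝ)
    (hentry : ∀ i k, M i k = ∑ j, e i j * e k j * ((d i)⁻¹ * (d j)⁻¹))
    (z : ℂ) (v : Fin n → ℂ) (hv : v ≠ 0)
    (hcomp : ∀ i, ∑ k, (M i k : ℂ) * v k = z * v i) :
    z.im = 0 ∧ 0 ≤ z.re := by
  classical
  set t : Fin n → ℂ := fun j => ∑ i, (e i j : ℂ) * v i with ht
  set P : ℝ := ∑ i, d i * Complex.normSq (v i) with hPdef
  set Q : ℝ := ∑ j, (d j)⁻¹ * Complex.normSq (t j) with hQdef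
  have hdC : ∀ i, (d i : ℂ) ≠ 0 := fun i => by
    exact_mod_cast ne_of_gt (hd i)
  have hP : 0 < P := by
    obtain ⟨i0, hi0⟩ : ∃ i, v i ≠ 0 := by
      by_contra h
      push_neg at h
      exact hv (funext h)
    apply Finset.sum_pos'
    · intro i _
      exact mul_nonneg (hd i).le (Complex.normSq_nonneg _)
    · exact ⟨i0, mem_univ _, mul_pos (hd i0) (Complex.normSq_pos.mpr hi0)⟩
  have hQ : 0 ≤ Q := by
    apply Finset.sum_nonneg
    intro j _
    exact mul_nonneg (inv_nonneg.mpr (hd j).le) (Complex.normSq_nonneg _)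
  have hentryC : ∀ i k, ((M i k : ℝ) : ℂ) =
      ∑ j, (e i j : ℂ) * (e k j : ℂ) * (((d i : ℂ))⁻¹ * ((d j : ℂ))⁻¹) := by
    intro i k
    rw [hentry i k]
    push_cast
    rfl
  have hconjt : ∀ j, (starRingEnd ℂ) (t j) = ∑ i, (e i j : ℂ) * (starRingEnd ℂ) (v i) := by
    intro j
    rw [ht]
    simp only [map_sum, _root_.map_mul, Complex.conj_ofReal]
  have step : ∀ i, (d i : ℂ) * (starRingEnd ℂ) (v i) * (∑ k, (M i k : ℂ) * v k) =
      ∑ j, ∑ k, ((e i j : ℂ) * (starRingEnd ℂ) (v i)) * ((e k j : ℂ) * v k) * ((d j : ℂ))⁻¹ := by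
    intro i
    rw [Finset.mul_sum, Finset.sum_comm]
    apply Finset.sum_congr rfl
    intro k _
    rw [hentryC i k, Finset.sum_mul, Finset.mul_sum]
    apply Finset.sum_congr rfl
    intro j _
    have hcan : (d i : ℂ) * ((d i : ℂ))⁻¹ = 1 := mul_inv_cancel₀ (hdC i)
    calc (d i : ℂ) * (starRingEnd ℂ) (v i) * ((e i j : ℂ) * (e k j : ℂ) * (((d i : ℂ))⁻¹ * ((d j : ℂ))⁻¹) * v k)
        = ((d i : ℂ) * ((d i : ℂ))⁻¹) * ((e i j : ℂ) * (starRingEnd ℂ) (v i) * ((e k j : ℂ) * v k) * ((d j : ℂ))⁻¹) := by ring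
      _ = (e i j : ℂ) * (starRingEnd ℂ) (v i) * ((e k j : ℂ) * v k) * ((d j : ℂ))⁻¹ := by rw [hcan, one_mul]
  have hkey : z * (P : ℂ) = (Q : ℂ) := by
    have h1 : z * (P : ℂ) = ∑ i, (d i : ℂ) * (starRingEnd ℂ) (v i) * (z * v i) := by
      rw [hPdef]
      push_cast
      rw [Finset.mul_sum]
      apply Finset.sum_congr rfl
      intro i _
      rw [← Complex.mul_conj (v i)]
      ring
    have h2 : ∑ i, (d i : ℂ) * (starRingEnd ℂ) (v i) * (z * v i)
        = ∑ j, ((d j : ℂ))⁻¹ * ((starRingEnd ℂ) (t j) * t j) := by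
      calc ∑ i, (d i : ℂ) * (starRingEnd ℂ) (v i) * (z * v i)
          = ∑ i, (d i : ℂ) * (starRingEnd ℂ) (v i) * (∑ k, (M i k : ℂ) * v k) := by
            apply Finset.sum_congr rfl
            intro i _
            rw [hcomp i]
        _ = ∑ i, ∑ j, ∑ k, ((e i j : ℂ) * (starRingEnd ℂ) (v i)) * ((e k j : ℂ) * v k) * ((d j : ℂ))⁻¹ := by
            apply Finset.sum_congr rfl
            intro i _
            exact step i
        _ = ∑ j, ∑ i, ∑ k, ((e i j : ℂ) * (starRingEnd ℂ) (v i)) * ((e k j : ℂ) * v k) * ((d j : ℂ))⁻¹ := by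
            exact Finset.sum_comm
        _ = ∑ j, ((d j : ℂ))⁻¹ * ((starRingEnd ℂ) (t j) * t j) := by
            apply Finset.sum_congr rfl
            intro j _
            rw [hconjt j]
            show _ = ((d j : ℂ))⁻¹ * ((∑ i, (e i j : ℂ) * (starRingEnd ℂ) (v i)) * (∑ k, (e k j : ℂ) * v k))
            rw [Finset.sum_mul_sum, Finset.mul_sum]
            apply Finset.sum_congr rfl
            intro i _
            rw [Finset.mul_sum]
            apply Finset.sum_congr rfl
            intro k _
            ring
    have h3 : (Q : ℂ) = ∑ j, ((d j : ℂ))⁻¹ * ((starRingEnd ℂ) (t j) * t j) := by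
      rw [hQdef]
      push_cast
      apply Finset.sum_congr rfl
      intro j _
      rw [← Complex.mul_conj (t j)]
      ring
    rw [h1, h2, h3]
  have hz : z = ((Q / P : ℝ) : ℂ) := by
    have hPne : (P : ℂ) ≠ 0 := by exact_mod_cast ne_of_gt hP
    field_simp
    rw [Complex.ofReal_div, eq_div_iff hPne]; exact hkey
  constructor
  · rw [hz]; exact Complex.ofReal_im _
  · rw [hz, Complex.ofReal_re]
    exact div_nonneg hQ hP.le

lemma re_sum_nonneg (m : Multiset ℂ) (h : ∀ z ∈ m, 0 ≤ z.re) : 0 ≤ m.sum.re := by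
  induction m using Multiset.induction_on with
  | empty => simp
  | cons a m ih =>
    rw [Multiset.sum_cons, Complex.add_re]
    have h1 : 0 ≤ a.re := h a (Multiset.mem_cons_self a m)
    have h2 : 0 ≤ m.sum.re := ih (fun z hz => h z (Multiset.mem_cons_of_mem hz))
    linarith

/-- If every vertex of a digraph has in-degree equal to out-degree and out-degree at least
`αs` with `α ≥ 1/2`, then all eigenvalues of `M = D⁻¹WD⁻¹Wᵀ` (the roots of its
characteristic polynomial over `ℂ`) are real and nonnegative, the largest eigenvalue is
`1`, and the second largest eigenvalue is at most `1 − (2α − 1)s²/(d_max⁺)²`. -/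
theorem stmt11 (s : ℕ) (hs : 0 < s) (α : ℝ) (hα : 1 / 2 ≤ α) (E : Fin s → Fin s → Bool)
    (hbal : ∀ i : Fin s, inDeg E i = outDeg E i)
    (hdeg : ∀ i : Fin s, α * s ≤ (outDeg E i : ℝ))
    (M : Matrix (Fin s) (Fin s) ℝ)
    (hM : M = Dinv E * Wbin E * Dinv E * (Wbin E)ᵀ) :
    (∀ z ∈ (M.charpoly.map (algebraMap ℝ ℂ)).roots, z.im = 0 ∧ 0 ≤ z.re) ∧
      (1 : ℂ) ∈ (M.charpoly.map (algebraMap ℝ ℂ)).roots ∧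
      (∀ z ∈ (M.charpoly.map (algebraMap ℝ ℂ)).roots, z.re ≤ 1) ∧
      (∀ z ∈ ((M.charpoly.map (algebraMap ℝ ℂ)).roots).erase 1,
        z.re ≤ 1 - (2 * α - 1) * (s : ℝ) ^ 2 / (dmaxOut E : ℝ) ^ 2) := by
  classical
  -- notation
  set d : Fin s → ℝ := fun i => (outDeg E i : ℝ) with hd_def
  set e : Fin s → Fin s → ℝ := fun i j => if E i j = true then (1 : ℝ) else 0 with he_def
  have hαpos : (0 : ℝ) < α := by
    have : (0:ℝ) < 1/2 := by norm_num
    linarith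
  have hαs : (0 : ℝ) < α * s := by
    apply mul_pos hαpos
    exact_mod_cast hs
  have hdpos : ∀ i, 0 < d i := fun i => lt_of_lt_of_le hαs (hdeg i)
  have hdne : ∀ i, d i ≠ 0 := fun i => ne_of_gt (hdpos i)
  -- entry formula
  have hentry : ∀ i k, M i k = ∑ j, e i j * e k j * ((d i)⁻¹ * (d j)⁻¹) := by
    intro i k
    rw [hM]
    have h1 : Dinv E * Wbin E * Dinv E
        = fun a b => (outDeg E a : ℝ)⁻¹ * Wbin E a b * (outDeg E b : ℝ)⁻¹ := by
      ext a b
      simp [Dinv, Matrix.diagonal_mul, Matrix.mul_diagonal]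
    rw [h1]
    change ∑ j, ((outDeg E i : ℝ)⁻¹ * Wbin E i j * (outDeg E j : ℝ)⁻¹) * (Wbin E)ᵀ j k = _
    simp only [Matrix.mul_apply, Matrix.transpose_apply, Wbin]
    apply Finset.sum_congr rfl
    intro j _
    show (d i)⁻¹ * (if E i j = true then (1:ℝ) else 0) * (d j)⁻¹ * (if E k j = true then (1:ℝ) else 0) = _
    ring
  -- row sums of e
  have hrow_e : ∀ i, ∑ j, e i j = d i := by
    intro i
    rw [he_def, hd_def]
    simp [outDeg, Finset.sum_boole]
  have hcol_e : ∀ j, ∑ i, e i j = d j := by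
    intro j
    rw [he_def, hd_def]
    simp only []
    rw [Finset.sum_boole]
    have : (Finset.univ.filter fun i => E i j = true).card = inDeg E j := rfl
    rw [this, hbal j]
  have he01 : ∀ i j, e i j = 0 ∨ e i j = 1 := by
    intro i j
    rw [he_def]
    by_cases h : E i j = true <;> simp [h]
  have he_nonneg : ∀ i j, 0 ≤ e i j := by
    intro i j
    rcases he01 i j with h | h <;> rw [h] <;> norm_num
  -- row sums of M
  have hrowM : ∀ i, ∑ k, M i k = 1 := by
    intro i
    have : ∑ k, M i k = ∑ k, ∑ j, e i j * e k j * ((d i)⁻¹ * (d j)⁻¹) := by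
      apply Finset.sum_congr rfl
      intro k _
      exact hentry i k
    rw [this, Finset.sum_comm]
    have h2 : ∀ j, ∑ k, e i j * e k j * ((d i)⁻¹ * (d j)⁻¹) = e i j * (d i)⁻¹ := by
      intro j
      have : ∑ k, e i j * e k j * ((d i)⁻¹ * (d j)⁻¹)
          = (e i j * ((d i)⁻¹ * (d j)⁻¹)) * ∑ k, e k j := by
        rw [Finset.mul_sum]
        apply Finset.sum_congr rfl
        intro k _
        ring
      rw [this, hcol_e j, mul_assoc, mul_assoc, inv_mul_cancel₀ (hdne j), mul_one]
    rw [Finset.sum_congr rfl (fun j _ => h2 j), ← Finset.sum_mul, hrow_e i,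
      mul_inv_cancel₀ (hdne i)]
  -- nonnegativity of entries
  have hMnn : ∀ i k, (0:ℝ) ≤ M i k := by
    intro i k
    rw [hentry i k]
    apply Finset.sum_nonneg
    intro j _
    apply mul_nonneg (mul_nonneg (he_nonneg i j) (he_nonneg k j))
    apply mul_nonneg (inv_nonneg.mpr (hdpos i).le) (inv_nonneg.mpr (hdpos j).le)
  -- dmax facts
  have hbdd : BddAbove (Set.range (outDeg E)) := (Set.finite_range _).bddAbove
  have hdm_le : ∀ i, d i ≤ (dmaxOut E : ℝ) := by
    intro i
    have h : outDeg E i ≤ dmaxOut E := le_csSup hbdd ⟨i, rfl⟩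
    show (outDeg E i : ℝ) ≤ (dmaxOut E : ℝ)
    exact_mod_cast h
  have hdm_pos : (0:ℝ) < (dmaxOut E : ℝ) := lt_of_lt_of_le (hdpos ⟨0, hs⟩) (hdm_le ⟨0, hs⟩)
  set dm : ℝ := (dmaxOut E : ℝ) with hdm_def
  set δ : ℝ := (2 * α - 1) * s / dm ^ 2 with hδ_def
  have hδnn : 0 ≤ δ := by
    apply div_nonneg _ (by positivity)
    have : (0:ℝ) ≤ 2 * α - 1 := by linarith
    have hs' : (0:ℝ) ≤ s := by positivity
    exact mul_nonneg this hs'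
  -- lower bound on entries
  have hδle : ∀ i k, δ ≤ M i k := by
    intro i k
    set T := Finset.univ.filter (fun j => E i j = true ∧ E k j = true) with hT
    have hcard : (2 * α - 1) * s ≤ (T.card : ℝ) := by
      have hui : (Finset.univ.filter fun j => E i j = true) ∪ (Finset.univ.filter fun j => E k j = true) ⊆ Finset.univ := Finset.subset_univ _
      have h1 : ((Finset.univ.filter fun j => E i j = true) ∪ (Finset.univ.filter fun j => E k j = true)).card ≤ s := by
        have := Finset.card_le_card hui
        simpa using this
      have h2 : ((Finset.univ.filter fun j => E i j = true) ∩ (Finset.univ.filter fun j => E k j = true)) = T := by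
        rw [hT, ← Finset.filter_and]
      have h3 := Finset.card_union_add_card_inter
        (Finset.univ.filter fun j => E i j = true) (Finset.univ.filter fun j => E k j = true)
      rw [h2] at h3
      have h4 : outDeg E i + outDeg E k ≤ s + T.card := by
        rw [outDeg, outDeg, ← h3]
        omega
      have h5 : (outDeg E i : ℝ) + outDeg E k ≤ (s : ℝ) + T.card := by exact_mod_cast h4
      have h6 := hdeg i
      have h7 := hdeg k
      linarith
    have hterm : ∀ j ∈ T, (dm ^ 2)⁻¹ ≤ e i j * e k j * ((d i)⁻¹ * (d j)⁻¹) := by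
      intro j hj
      rw [hT, Finset.mem_filter] at hj
      have heij : e i j = 1 := by rw [he_def]; simp [hj.2.1]
      have hekj : e k j = 1 := by rw [he_def]; simp [hj.2.2]
      rw [heij, hekj, one_mul, one_mul]
      have hmul : d i * d j ≤ dm ^ 2 := by
        have := hdm_le i
        have := hdm_le j
        have := (hdpos i).le
        have := (hdpos j).le
        nlinarith
      calc (dm ^ 2)⁻¹ ≤ (d i * d j)⁻¹ := by
            apply inv_anti₀ (mul_pos (hdpos i) (hdpos j)) hmul
        _ = (d i)⁻¹ * (d j)⁻¹ := by rw [mul_inv]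
    calc δ = (2 * α - 1) * s * (dm ^ 2)⁻¹ := by rw [hδ_def]; ring
      _ ≤ (T.card : ℝ) * (dm ^ 2)⁻¹ := by
          apply mul_le_mul_of_nonneg_right hcard (by positivity)
      _ ≤ ∑ j ∈ T, e i j * e k j * ((d i)⁻¹ * (d j)⁻¹) := by
          have := Finset.sum_le_sum hterm
          rw [Finset.sum_const, nsmul_eq_mul] at this
          exact this
      _ ≤ ∑ j, e i j * e k j * ((d i)⁻¹ * (d j)⁻¹) := by
          apply Finset.sum_le_sum_of_subset_of_nonneg (Finset.subset_univ T)
          intro j _ _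
          apply mul_nonneg (mul_nonneg (he_nonneg i j) (he_nonneg k j))
          exact mul_nonneg (inv_nonneg.mpr (hdpos i).le) (inv_nonneg.mpr (hdpos j).le)
      _ = M i k := (hentry i k).symm
  -- trace bound
  have htrace : ∑ i, M i i ≤ α⁻¹ := by
    have hdiag : ∀ i, M i i ≤ (α * s)⁻¹ := by
      intro i
      rw [hentry i i]
      have hstep : ∀ j, e i j * e i j * ((d i)⁻¹ * (d j)⁻¹) ≤ e i j * ((d i)⁻¹ * (α * s)⁻¹) := by
        intro j
        rcases he01 i j with h | h
        · rw [h]; simp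
        · rw [h, one_mul, one_mul, one_mul]
          apply mul_le_mul_of_nonneg_left _ (inv_nonneg.mpr (hdpos i).le)
          exact inv_anti₀ hαs (hdeg j)
      calc ∑ j, e i j * e i j * ((d i)⁻¹ * (d j)⁻¹)
          ≤ ∑ j, e i j * ((d i)⁻¹ * (α * s)⁻¹) := Finset.sum_le_sum (fun j _ => hstep j)
        _ = (∑ j, e i j) * ((d i)⁻¹ * (α * s)⁻¹) := by rw [Finset.sum_mul]
        _ = d i * ((d i)⁻¹ * (α * s)⁻¹) := by rw [hrow_e i]
        _ = (α * s)⁻¹ := by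
            rw [← mul_assoc, mul_inv_cancel₀ (hdne i), one_mul]
    calc ∑ i, M i i ≤ ∑ _i : Fin s, (α * s)⁻¹ := Finset.sum_le_sum (fun i _ => hdiag i)
      _ = s * (α * s)⁻¹ := by rw [Finset.sum_const, nsmul_eq_mul]; simp
      _ = α⁻¹ := by
          rw [mul_inv]
          have hsne : (s:ℝ) ≠ 0 := by positivity
          field_simp
  -- key eigenvalue analysis
  have key : ∀ z ∈ (M.charpoly.map (algebraMap ℝ ℂ)).roots,
      z.im = 0 ∧ 0 ≤ z.re ∧ (z.re = 1 ∨ z.re ≤ 1 - s * δ) := by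
    intro z hz
    obtain ⟨v, hv, heig⟩ := (root_iff_eigen M z).mp hz
    have hcomp : ∀ i, ∑ k, (M i k : ℂ) * v k = z * v i := by
      intro i
      have := congrFun heig i
      simpa [Matrix.mulVec, dotProduct, Matrix.map_apply] using this
    obtain ⟨him, hre⟩ := real_nonneg_eig d hdpos e M hentry z v hv hcomp
    refine ⟨him, hre, ?_⟩
    -- real eigenvector
    set lam : ℝ := z.re with hlam
    have hzeq : z = (lam : ℂ) := by
      apply Complex.ext
      · simp [hlam]
      · simp [him]
    have heigre : ∀ i, ∑ k, M i k * (v k).re = lam * (v i).re := by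
      intro i
      have := congrArg Complex.re (hcomp i)
      rw [Complex.re_sum] at this
      simpa [hzeq, Complex.mul_re] using this
    have heigim : ∀ i, ∑ k, M i k * (v k).im = lam * (v i).im := by
      intro i
      have := congrArg Complex.im (hcomp i)
      rw [Complex.im_sum] at this
      simpa [hzeq, Complex.mul_im] using this
    obtain ⟨i0, hi0⟩ : ∃ i, v i ≠ 0 := by
      by_contra h
      push_neg at h
      exact hv (funext h)
    have hsplit : (v i0).re ≠ 0 ∨ (v i0).im ≠ 0 := by
      by_contra h
      push_neg at h
      exact hi0 (Complex.ext h.1 h.2)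
    have hosc : lam = 1 ∨ lam ≤ 1 - s * δ := by
      rcases hsplit with h | h
      · exact osc_lemma M δ lam hδle hrowM (fun i => (v i).re)
          (fun hc => h (congrFun hc i0)) heigre
      · exact osc_lemma M δ lam hδle hrowM (fun i => (v i).im)
          (fun hc => h (congrFun hc i0)) heigim
    exact hosc
  -- membership of 1
  have h1mem : (1 : ℂ) ∈ (M.charpoly.map (algebraMap ℝ ℂ)).roots := by
    rw [root_iff_eigen]
    refine ⟨fun _ => 1, ?_, ?_⟩
    · intro h
      have := congrFun h ⟨0, hs⟩
      simp at this
    · ext i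
      simp only [Matrix.mulVec, dotProduct, Matrix.map_apply, Pi.smul_apply,
        smul_eq_mul, mul_one, one_mul]
      have : ((∑ k, M i k : ℝ) : ℂ) = 1 := by rw [hrowM i]; norm_num
      rw [← this]
      push_cast
      rfl
  refine ⟨fun z hz => ⟨(key z hz).1, (key z hz).2.1⟩, h1mem, ?_, ?_⟩
  · intro z hz
    rcases (key z hz).2.2 with h | h
    · exact le_of_eq h
    · have : 0 ≤ (s:ℝ) * δ := mul_nonneg (by positivity) hδnn
      linarith
  · intro z hz
    have hzmem : z ∈ (M.charpoly.map (algebraMap ℝ ℂ)).roots := Multiset.mem_of_mem_erase hz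
    by_cases hz1 : z = 1
    · -- multiplicity argument via trace
      subst hz1
      rcases eq_or_lt_of_le hα with hαeq | hαlt
      · rw [← hαeq]
        norm_num
      · exfalso
        set p := M.charpoly.map (algebraMap ℝ ℂ) with hp
        set Mc := M.map (algebraMap ℝ ℂ) with hMc
        have hpc : p = Mc.charpoly := (Matrix.charpoly_map M (algebraMap ℝ ℂ)).symm
        have htr : Mc.trace = p.roots.sum := by
          rw [hpc]
          exact Matrix.trace_eq_sum_roots_charpoly Mc
        have htrc : Mc.trace = ((∑ i, M i i : ℝ) : ℂ) := by
          rw [Matrix.trace]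
          push_cast
          apply Finset.sum_congr rfl
          intro i _
          simp [hMc, Matrix.diag, Matrix.map_apply]
        have hsplit1 : p.roots = 1 ::ₘ p.roots.erase 1 := (Multiset.cons_erase h1mem).symm
        have hsplit2 : p.roots.erase 1 = 1 ::ₘ (p.roots.erase 1).erase 1 :=
          (Multiset.cons_erase hz).symm
        have hrest : ∀ w ∈ (p.roots.erase 1).erase 1, 0 ≤ w.re := by
          intro w hw
          have : w ∈ p.roots :=
            Multiset.mem_of_mem_erase (Multiset.mem_of_mem_erase hw)
          exact (key w this).2.1
        have hsum_re : (2:ℝ) ≤ (p.roots.sum).re := by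
          rw [hsplit1, hsplit2]
          rw [Multiset.sum_cons, Multiset.sum_cons]
          simp only [Complex.add_re, Complex.one_re]
          have := re_sum_nonneg _ hrest
          linarith
        have htr_re : (p.roots.sum).re = ∑ i, M i i := by
          rw [← htr, htrc, Complex.ofReal_re]
        rw [htr_re] at hsum_re
        have hαinv : α⁻¹ < 2 := by
          have h1 : (0:ℝ) < 2 * α - 1 := by linarith
          have h2 : (0:ℝ) < α⁻¹ := inv_pos.mpr hαpos
          have h3 : α * α⁻¹ = 1 := mul_inv_cancel₀ (ne_of_gt hαpos)
          nlinarith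
        linarith
    · -- z ≠ 1 : use spectral gap
      obtain ⟨him, hre, hosc⟩ := key z hzmem
      have hzre : z = ((z.re : ℝ) : ℂ) := Complex.ext rfl (by simp [him])
      have hne1 : z.re ≠ 1 := by
        intro h
        apply hz1
        rw [hzre, h]
        norm_num
      rcases hosc with h | h
      · exact absurd h hne1
      · calc z.re ≤ 1 - s * δ := h
          _ = 1 - (2 * α - 1) * (s:ℝ) ^ 2 / dm ^ 2 := by rw [hδ_def]; ring
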